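/- Soft performance difference lemma with arbitrary reference function: For every step-indexed function f = (f_h)_{h=1}^H with f_h : S_h × A → ℝ and all policies π† and π, one has J_β(π†) − J_β(π) = E_{π†}[Σ_{h=1}^H ((T^π_β f)_h(s_h,a_h) − f_h(s_h,a_h))] + E_π[Σ_{h=1}^H (f_h(s_h,a_h) − (T^π_β f)_h(s_h,a_h))] + E_{π†}[Σ_{h=1}^H ( f_h(s_h,a_h) − β log(π†_h(a_h|s_h)/π_ref,h(a_h|s_h)) − E_{a∼π_h(·|s_h)}[ f_h(s_h,a) − β log(π_h(a|s_h)/π_ref,h(a|s_h)) ] )]. -/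

import Mathlib

open Finset

set_option linter.unusedSectionVars false
set_option maxHeartbeats 1000000

namespace TBRM

/-- `p` is a probability mass function on a finite type. -/
def IsPMF {X : Type*} [Fintype X] (p : X → ℝ) : Prop :=
  (∀ x, 0 ≤ p x) ∧ ∑ x, p x = 1

/-- χ²-divergence between pmfs on a finite type. -/
noncomputable def chiSq {X : Type*} [Fintype X] (p q : X → ℝ) : ℝ :=
  (∑ x, p x ^ 2 / q x) - 1

variable {H : ℕ} {S : Fin (H + 1) → Type*} {A : Type*}
variable [∀ i, Fintype (S i)] [∀ i, DecidableEq (S i)] [Fintype A] [DecidableEq A]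

/-- Density of a full trajectory (including the extra final state `s_{H+1}`),
under initial distribution `ρ`, transition kernels `P`, and policy `π`. -/
noncomputable def trajDensity (ρ : S 0 → ℝ)
    (P : ∀ h : Fin H, S h.castSucc → A → S h.succ → ℝ)
    (π : ∀ h : Fin H, S h.castSucc → A → ℝ)
    (s : ∀ i : Fin (H + 1), S i) (a : Fin H → A) : ℝ :=
  ρ (s 0) * ∏ h : Fin H, (π h (s h.castSucc) (a h) * P h (s h.castSucc) (a h) (s h.succ))

/-- Expectation of a trajectory functional under policy `π`. -/
noncomputable def expTraj (ρ : S 0 → ℝ)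
    (P : ∀ h : Fin H, S h.castSucc → A → S h.succ → ℝ)
    (π : ∀ h : Fin H, S h.castSucc → A → ℝ)
    (f : (∀ i : Fin (H + 1), S i) → (Fin H → A) → ℝ) : ℝ :=
  ∑ s : ∀ i : Fin (H + 1), S i, ∑ a : Fin H → A, trajDensity ρ P π s a * f s a

/-- Step-`h` occupancy measure `d_h^π(x,b)`. -/
noncomputable def occ (ρ : S 0 → ℝ)
    (P : ∀ h : Fin H, S h.castSucc → A → S h.succ → ℝ)
    (π : ∀ h : Fin H, S h.castSucc → A → ℝ)
    (h : Fin H) (x : S h.castSucc) (b : A) : ℝ :=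
  expTraj ρ P π (fun s a => if s h.castSucc = x ∧ a h = b then 1 else 0)


/-- KL-regularized return `J_β(π)` relative to a reference policy `πref`. -/
noncomputable def KLret (ρ : S 0 → ℝ)
    (P : ∀ h : Fin H, S h.castSucc → A → S h.succ → ℝ)
    (πref : ∀ h : Fin H, S h.castSucc → A → ℝ)
    (r : ∀ h : Fin H, S h.castSucc → A → ℝ) (β : ℝ)
    (π : ∀ h : Fin H, S h.castSucc → A → ℝ) : ℝ :=
  expTraj ρ P π (fun s a => ∑ h : Fin H,
    (r h (s h.castSucc) (a h)
      - β * Real.log (π h (s h.castSucc) (a h) / πref h (s h.castSucc) (a h))))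

/-- The per-layer "soft continuation value" of a step-indexed function `f` under a policy
`π`: it vanishes on the last layer `S_{H+1}`, and on layer `h` it is
`E_{a∼π_h(·|s)}[ f_h(s,a) − β log(π_h(a|s)/πref_h(a|s)) ]`. -/
noncomputable def softCont
    (πref : ∀ h : Fin H, S h.castSucc → A → ℝ) (β : ℝ)
    (π : ∀ h : Fin H, S h.castSucc → A → ℝ)
    (f : ∀ h : Fin H, S h.castSucc → A → ℝ) :
    ∀ i : Fin (H + 1), S i → ℝ :=
  Fin.lastCases (fun _ => 0)
    (fun h s => ∑ a : A, π h s a * (f h s a - β * Real.log (π h s a / πref h s a)))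

/-- The soft Bellman policy operator `(T^π_β f)_h(s,a)`: for `h < H` it equals
`r_h(s,a) + E_{s'∼P_h(s,a)} E_{a'∼π_{h+1}(·|s')}[f_{h+1}(s',a') − β log(π_{h+1}(a'|s')/πref_{h+1}(a'|s'))]`,
and for the last step it equals `r_H(s,a)` (the continuation value being `0`). -/
noncomputable def Tpol (P : ∀ h : Fin H, S h.castSucc → A → S h.succ → ℝ)
    (πref : ∀ h : Fin H, S h.castSucc → A → ℝ)
    (r : ∀ h : Fin H, S h.castSucc → A → ℝ) (β : ℝ)
    (π : ∀ h : Fin H, S h.castSucc → A → ℝ)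
    (f : ∀ h : Fin H, S h.castSucc → A → ℝ)
    (h : Fin H) (s : S h.castSucc) (b : A) : ℝ :=
  r h s b + ∑ s' : S h.succ, P h s b s' * softCont πref β π f h.succ s'


private lemma sum_pi_fiber_swap {ι : Type*} [DecidableEq ι] [Fintype ι] {T : ι → Type*}
    [∀ j, Fintype (T j)] [∀ j, DecidableEq (T j)] (i : ι) (F : (∀ j, T j) → ℝ)
    (hF : ∀ s y, F (Function.update s i y) = F s) (x y : T i) :
    ∑ s : ∀ j, T j, (if s i = x then F s else 0) = ∑ s : ∀ j, T j, (if s i = y then F s else 0) := by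
  set e : (∀ j, T j) → (∀ j, T j) := fun s => Function.update s i (Equiv.swap x y (s i)) with he
  have hinv : Function.Involutive e := by
    intro s
    simp only [he, Function.update_self, Function.update_idem, Equiv.swap_apply_self,
      Function.update_eq_self]
  refine Fintype.sum_bijective e hinv.bijective _ _ ?_
  intro s
  have h1 : e s i = Equiv.swap x y (s i) := Function.update_self _ _ _
  have h2 : F (e s) = F s := hF s _
  rw [h1, h2]
  by_cases hx : s i = x
  · simp [hx]
  · have : Equiv.swap x y (s i) ≠ y := by
      intro hc
      apply hx
      have := (Equiv.swap x y).injective (a₁ := s i) (a₂ := x)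
      apply this
      rw [hc, Equiv.swap_apply_left]
    simp [hx, this]

private lemma sum_pi_eval {ι : Type*} [DecidableEq ι] [Fintype ι] {T : ι → Type*}
    [∀ j, Fintype (T j)] [∀ j, DecidableEq (T j)] (i : ι) [Nonempty (T i)]
    (Φ : T i → (∀ j, T j) → ℝ) (hΦ : ∀ x s y, Φ x (Function.update s i y) = Φ x s) :
    ∑ s : ∀ j, T j, Φ (s i) s = (Fintype.card (T i) : ℝ)⁻¹ * ∑ x : T i, ∑ s : ∀ j, T j, Φ x s := by
  have hsplit : ∑ s : ∀ j, T j, Φ (s i) s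
      = ∑ x : T i, ∑ s : ∀ j, T j, (if s i = x then Φ x s else 0) := by
    rw [Finset.sum_comm]
    refine Fintype.sum_congr _ _ (fun s => ?_)
    rw [Finset.sum_eq_single (s i)]
    · simp
    · intro b _ hb; simp [Ne.symm hb]
    · simp
  rw [hsplit]
  have hx0 : ∀ x : T i, ∑ s : ∀ j, T j, (if s i = x then Φ x s else 0)
      = (Fintype.card (T i) : ℝ)⁻¹ * ∑ s : ∀ j, T j, Φ x s := by
    intro x
    have hall : ∀ y : T i, ∑ s : ∀ j, T j, (if s i = y then Φ x s else 0)
        = ∑ s : ∀ j, T j, (if s i = x then Φ x s else 0) :=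
      fun y => sum_pi_fiber_swap i (Φ x) (fun s z => hΦ x s z) y x
    have htot : ∑ y : T i, ∑ s : ∀ j, T j, (if s i = y then Φ x s else 0)
        = ∑ s : ∀ j, T j, Φ x s := by
      rw [Finset.sum_comm]
      refine Fintype.sum_congr _ _ (fun s => ?_)
      rw [Finset.sum_eq_single (s i)]
      · simp
      · intro b _ hb; simp [Ne.symm hb]
      · simp
    have hcard : (Fintype.card (T i) : ℝ) * ∑ s : ∀ j, T j, (if s i = x then Φ x s else 0)
        = ∑ s : ∀ j, T j, Φ x s := by
      rw [← htot]
      rw [Finset.sum_congr rfl (fun y _ => hall y)]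
      simp [Finset.sum_const, mul_comm]
    have hc0 : (Fintype.card (T i) : ℝ) ≠ 0 := by
      simp [Fintype.card_ne_zero]
    field_simp at hcard ⊢
    linarith [hcard]
  rw [Finset.sum_congr rfl (fun x _ => hx0 x), ← Finset.mul_sum]
/-- Forward state marginals. -/
noncomputable def nu (ρ : S 0 → ℝ)
    (P : ∀ h : Fin H, S h.castSucc → A → S h.succ → ℝ)
    (μ : ∀ h : Fin H, S h.castSucc → A → ℝ) : ∀ i : Fin (H + 1), S i → ℝ :=
  Fin.induction ρ (fun h prev x' => ∑ x, ∑ b, prev x * μ h x b * P h x b x')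

lemma nu_zero (ρ : S 0 → ℝ) (P : ∀ h : Fin H, S h.castSucc → A → S h.succ → ℝ)
    (μ : ∀ h : Fin H, S h.castSucc → A → ℝ) : nu ρ P μ 0 = ρ := rfl

lemma nu_succ (ρ : S 0 → ℝ) (P : ∀ h : Fin H, S h.castSucc → A → S h.succ → ℝ)
    (μ : ∀ h : Fin H, S h.castSucc → A → ℝ) (h : Fin H) (x' : S h.succ) :
    nu ρ P μ h.succ x' = ∑ x, ∑ b, nu ρ P μ h.castSucc x * μ h x b * P h x b x' := by
  simp [nu, Fin.induction_succ]

/-- Partially integrated total mass. -/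
noncomputable def Gaux (ρ : S 0 → ℝ)
    (P : ∀ h : Fin H, S h.castSucc → A → S h.succ → ℝ)
    (μ : ∀ h : Fin H, S h.castSucc → A → ℝ) (k : Fin (H + 1)) : ℝ :=
  ∑ s : ∀ i : Fin (H + 1), S i, ∑ a : Fin H → A, nu ρ P μ k (s k) *
    ∏ h : Fin H, (if k.val ≤ h.val then μ h (s h.castSucc) (a h) * P h (s h.castSucc) (a h) (s h.succ)
      else (Fintype.card (S h.castSucc) : ℝ)⁻¹ * (Fintype.card A : ℝ)⁻¹)
private lemma sum_swap4 {α β γ δ : Type*} [Fintype α] [Fintype β] [Fintype γ] [Fintype δ]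
    (F : α → β → γ → δ → ℝ) :
    ∑ s : α, ∑ a : β, ∑ x : γ, ∑ b : δ, F s a x b
      = ∑ x : γ, ∑ b : δ, ∑ s : α, ∑ a : β, F s a x b := by
  have h1 : ∑ s : α, ∑ a : β, ∑ x : γ, ∑ b : δ, F s a x b
      = ∑ s : α, ∑ x : γ, ∑ a : β, ∑ b : δ, F s a x b :=
    Fintype.sum_congr _ _ (fun s => Finset.sum_comm)
  have h2 : ∑ s : α, ∑ x : γ, ∑ a : β, ∑ b : δ, F s a x b
      = ∑ x : γ, ∑ s : α, ∑ a : β, ∑ b : δ, F s a x b := Finset.sum_comm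
  have h3 : ∑ x : γ, ∑ s : α, ∑ a : β, ∑ b : δ, F s a x b
      = ∑ x : γ, ∑ s : α, ∑ b : δ, ∑ a : β, F s a x b :=
    Fintype.sum_congr _ _ (fun x => Fintype.sum_congr _ _ (fun s => Finset.sum_comm))
  have h4 : ∑ x : γ, ∑ s : α, ∑ b : δ, ∑ a : β, F s a x b
      = ∑ x : γ, ∑ b : δ, ∑ s : α, ∑ a : β, F s a x b :=
    Fintype.sum_congr _ _ (fun x => Finset.sum_comm)
  rw [h1, h2, h3, h4]

lemma Gaux_step [∀ i, Nonempty (S i)] [Nonempty A] (ρ : S 0 → ℝ)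
    (P : ∀ h : Fin H, S h.castSucc → A → S h.succ → ℝ)
    (μ : ∀ h : Fin H, S h.castSucc → A → ℝ) (k : Fin H) :
    Gaux ρ P μ k.castSucc = Gaux ρ P μ k.succ := by
  classical
  set R : (∀ i : Fin (H + 1), S i) → (Fin H → A) → ℝ := fun s a =>
    ∏ h ∈ Finset.univ.erase k,
      (if k.val < h.val then μ h (s h.castSucc) (a h) * P h (s h.castSucc) (a h) (s h.succ)
        else (Fintype.card (S h.castSucc) : ℝ)⁻¹ * (Fintype.card A : ℝ)⁻¹) with hR
  have hsk : (k.succ : Fin (H + 1)) ≠ k.castSucc := by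
    intro hc; have := congrArg Fin.val hc; simp at this
  -- the product in Gaux k.castSucc
  have hprod_cast : ∀ (s : ∀ i : Fin (H + 1), S i) (a : Fin H → A),
      (∏ h : Fin H, (if k.castSucc.val ≤ h.val
          then μ h (s h.castSucc) (a h) * P h (s h.castSucc) (a h) (s h.succ)
          else (Fintype.card (S h.castSucc) : ℝ)⁻¹ * (Fintype.card A : ℝ)⁻¹))
        = (μ k (s k.castSucc) (a k) * P k (s k.castSucc) (a k) (s k.succ)) * R s a := by
    intro s a
    rw [← Finset.mul_prod_erase Finset.univ _ (Finset.mem_univ k)]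
    congr 1
    · rw [if_pos (by simp : (k.castSucc.val ≤ k.val))]
    · refine Finset.prod_congr rfl fun h hh => ?_
      have hne : h.val ≠ k.val := fun hc => (Finset.mem_erase.mp hh).1 (Fin.ext hc)
      by_cases hlt : k.val < h.val
      · rw [if_pos (by simp only [Fin.coe_castSucc]; omega), if_pos hlt]
      · rw [if_neg (by simp only [Fin.coe_castSucc]; omega), if_neg hlt]
  have hprod_succ : ∀ (s : ∀ i : Fin (H + 1), S i) (a : Fin H → A),
      (∏ h : Fin H, (if k.succ.val ≤ h.val
          then μ h (s h.castSucc) (a h) * P h (s h.castSucc) (a h) (s h.succ)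
          else (Fintype.card (S h.castSucc) : ℝ)⁻¹ * (Fintype.card A : ℝ)⁻¹))
        = ((Fintype.card (S k.castSucc) : ℝ)⁻¹ * (Fintype.card A : ℝ)⁻¹) * R s a := by
    intro s a
    rw [← Finset.mul_prod_erase Finset.univ _ (Finset.mem_univ k)]
    have h1 : (if (k.succ.val ≤ k.val)
        then μ k (s k.castSucc) (a k) * P k (s k.castSucc) (a k) (s k.succ)
        else (Fintype.card (S k.castSucc) : ℝ)⁻¹ * (Fintype.card A : ℝ)⁻¹)
        = (Fintype.card (S k.castSucc) : ℝ)⁻¹ * (Fintype.card A : ℝ)⁻¹ :=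
      if_neg (by simp)
    rw [h1]
    congr 1
  have hRs : ∀ (s : ∀ i : Fin (H + 1), S i) (a : Fin H → A) (y : S k.castSucc),
      R (Function.update s k.castSucc y) a = R s a := by
    intro s a y
    refine Finset.prod_congr rfl fun h hh => ?_
    have hne : h ≠ k := (Finset.mem_erase.mp hh).1
    by_cases hlt : k.val < h.val
    · rw [if_pos hlt, if_pos hlt]
      have h1 : h.castSucc ≠ k.castSucc := fun hc => hne (Fin.castSucc_injective _ hc)
      have h2 : (h.succ : Fin (H + 1)) ≠ k.castSucc := by
        intro hc; have := congrArg Fin.val hc; simp at this; omega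
      rw [Function.update_of_ne h1, Function.update_of_ne h2]
    · rw [if_neg hlt, if_neg hlt]
  have hRa : ∀ (s : ∀ i : Fin (H + 1), S i) (a : Fin H → A) (d : A),
      R s (Function.update a k d) = R s a := by
    intro s a d
    refine Finset.prod_congr rfl fun h hh => ?_
    have hne : h ≠ k := (Finset.mem_erase.mp hh).1
    by_cases hlt : k.val < h.val
    · rw [if_pos hlt, if_pos hlt, Function.update_of_ne hne]
    · rw [if_neg hlt, if_neg hlt]
  have hPupd : ∀ (s : ∀ i : Fin (H + 1), S i) (y : S k.castSucc),
      (Function.update s k.castSucc y) k.succ = s k.succ := fun s y =>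
    Function.update_of_ne hsk _ _
  -- rewrite both sides
  rw [Gaux, Gaux]
  calc ∑ s : ∀ i : Fin (H + 1), S i, ∑ a : Fin H → A, nu ρ P μ k.castSucc (s k.castSucc) *
        ∏ h : Fin H, (if k.castSucc.val ≤ h.val
          then μ h (s h.castSucc) (a h) * P h (s h.castSucc) (a h) (s h.succ)
          else (Fintype.card (S h.castSucc) : ℝ)⁻¹ * (Fintype.card A : ℝ)⁻¹)
      = ∑ s : ∀ i : Fin (H + 1), S i, ∑ a : Fin H → A,
          nu ρ P μ k.castSucc (s k.castSucc) *
            ((μ k (s k.castSucc) (a k) * P k (s k.castSucc) (a k) (s k.succ)) * R s a) := by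
        refine Fintype.sum_congr _ _ fun s => Fintype.sum_congr _ _ fun a => ?_
        rw [hprod_cast s a]
    _ = (Fintype.card (S k.castSucc) : ℝ)⁻¹ * ∑ x : S k.castSucc,
          ∑ s : ∀ i : Fin (H + 1), S i, ∑ a : Fin H → A,
            nu ρ P μ k.castSucc x * ((μ k x (a k) * P k x (a k) (s k.succ)) * R s a) := by
        refine sum_pi_eval (T := S) k.castSucc
          (fun x s => ∑ a : Fin H → A,
            nu ρ P μ k.castSucc x * ((μ k x (a k) * P k x (a k) (s k.succ)) * R s a)) ?_
        intro x s y
        refine Fintype.sum_congr _ _ fun a => ?_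
        rw [hPupd s y, hRs s a y]
    _ = (Fintype.card (S k.castSucc) : ℝ)⁻¹ * ∑ x : S k.castSucc,
          ∑ s : ∀ i : Fin (H + 1), S i, (Fintype.card A : ℝ)⁻¹ * ∑ b : A,
            ∑ a : Fin H → A,
            nu ρ P μ k.castSucc x * ((μ k x b * P k x b (s k.succ)) * R s a) := by
        congr 1
        refine Fintype.sum_congr _ _ fun x => Fintype.sum_congr _ _ fun s => ?_
        refine sum_pi_eval (T := fun _ : Fin H => A) k
          (fun b a => nu ρ P μ k.castSucc x * ((μ k x b * P k x b (s k.succ)) * R s a)) ?_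
        intro b a d
        rw [hRa s a d]
    _ = ∑ s : ∀ i : Fin (H + 1), S i, ∑ a : Fin H → A, nu ρ P μ k.succ (s k.succ) *
        ∏ h : Fin H, (if k.succ.val ≤ h.val
          then μ h (s h.castSucc) (a h) * P h (s h.castSucc) (a h) (s h.succ)
          else (Fintype.card (S h.castSucc) : ℝ)⁻¹ * (Fintype.card A : ℝ)⁻¹) := by
        have hrhs : ∀ (s : ∀ i : Fin (H + 1), S i) (a : Fin H → A),
            nu ρ P μ k.succ (s k.succ) *
              ∏ h : Fin H, (if k.succ.val ≤ h.val
                then μ h (s h.castSucc) (a h) * P h (s h.castSucc) (a h) (s h.succ)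
                else (Fintype.card (S h.castSucc) : ℝ)⁻¹ * (Fintype.card A : ℝ)⁻¹)
            = ∑ x : S k.castSucc, ∑ b : A,
                (nu ρ P μ k.castSucc x * μ k x b * P k x b (s k.succ)) *
                  (((Fintype.card (S k.castSucc) : ℝ)⁻¹ * (Fintype.card A : ℝ)⁻¹) * R s a) := by
          intro s a
          rw [hprod_succ s a, nu_succ, Finset.sum_mul]
          refine Fintype.sum_congr _ _ fun x => ?_
          rw [Finset.sum_mul]
        rw [Fintype.sum_congr _ _ fun s => Fintype.sum_congr _ _ fun a => hrhs s a]
        rw [sum_swap4 (fun s a x b =>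
          (nu ρ P μ k.castSucc x * μ k x b * P k x b (s k.succ)) *
            (((Fintype.card (S k.castSucc) : ℝ)⁻¹ * (Fintype.card A : ℝ)⁻¹) * R s a))]
        simp only [Finset.mul_sum]
        refine Fintype.sum_congr _ _ fun x => ?_
        rw [Finset.sum_comm]
        refine Fintype.sum_congr _ _ fun b => Fintype.sum_congr _ _ fun s =>
          Fintype.sum_congr _ _ fun a => ?_
        ring
lemma Gaux_zero (ρ : S 0 → ℝ) (P : ∀ h : Fin H, S h.castSucc → A → S h.succ → ℝ)
    (μ : ∀ h : Fin H, S h.castSucc → A → ℝ) :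
    Gaux ρ P μ 0 = ∑ s : ∀ i : Fin (H + 1), S i, ∑ a : Fin H → A, trajDensity ρ P μ s a := by
  rw [Gaux]
  refine Fintype.sum_congr _ _ fun s => Fintype.sum_congr _ _ fun a => ?_
  rw [trajDensity]
  congr 1

lemma Gaux_last [∀ i, Nonempty (S i)] [Nonempty A] (ρ : S 0 → ℝ)
    (P : ∀ h : Fin H, S h.castSucc → A → S h.succ → ℝ)
    (μ : ∀ h : Fin H, S h.castSucc → A → ℝ) :
    Gaux ρ P μ (Fin.last H) = ∑ x, nu ρ P μ (Fin.last H) x := by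
  have hA0 : (Fintype.card A : ℝ) ≠ 0 := Nat.cast_ne_zero.mpr Fintype.card_ne_zero
  have hS0 : ∀ i : Fin (H + 1), (Fintype.card (S i) : ℝ) ≠ 0 :=
    fun i => Nat.cast_ne_zero.mpr Fintype.card_ne_zero
  rw [Gaux]
  have hC : ∀ (s : ∀ i : Fin (H + 1), S i) (a : Fin H → A),
      (∏ h : Fin H, (if (Fin.last H).val ≤ h.val
          then μ h (s h.castSucc) (a h) * P h (s h.castSucc) (a h) (s h.succ)
          else (Fintype.card (S h.castSucc) : ℝ)⁻¹ * (Fintype.card A : ℝ)⁻¹))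
        = ∏ h : Fin H, ((Fintype.card (S h.castSucc) : ℝ)⁻¹ * (Fintype.card A : ℝ)⁻¹) := by
    intro s a
    refine Finset.prod_congr rfl fun h _ => ?_
    rw [if_neg (by have := h.isLt; simp only [Fin.val_last, not_le]; omega)]
  set K : ℝ := ∏ h : Fin H, ((Fintype.card (S h.castSucc) : ℝ)⁻¹ * (Fintype.card A : ℝ)⁻¹) with hK
  have hscal : (Fintype.card (Fin H → A) : ℝ) * K *
      ((Fintype.card (S (Fin.last H)) : ℝ)⁻¹ * (Fintype.card (∀ i : Fin (H + 1), S i) : ℝ)) = 1 := by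
    have hcard1 : (Fintype.card (Fin H → A) : ℝ) = ∏ _h : Fin H, (Fintype.card A : ℝ) := by
      rw [Fintype.card_pi]; push_cast; rfl
    have hcard2 : (Fintype.card (∀ i : Fin (H + 1), S i) : ℝ)
        = (∏ h : Fin H, (Fintype.card (S h.castSucc) : ℝ)) * (Fintype.card (S (Fin.last H)) : ℝ) := by
      rw [Fintype.card_pi]
      push_cast
      rw [Fin.prod_univ_castSucc (fun i => (Fintype.card (S i) : ℝ))]
    rw [hcard1, hcard2, hK, ← Finset.prod_mul_distrib]
    have e1 : ∀ h : Fin H, (Fintype.card A : ℝ) *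
        ((Fintype.card (S h.castSucc) : ℝ)⁻¹ * (Fintype.card A : ℝ)⁻¹) =
        ((Fintype.card (S h.castSucc) : ℝ))⁻¹ := by
      intro h
      rw [mul_comm ((Fintype.card (S h.castSucc) : ℝ))⁻¹ ((Fintype.card A : ℝ))⁻¹,
        ← mul_assoc, mul_inv_cancel₀ hA0, one_mul]
    rw [Finset.prod_congr rfl (fun h _ => e1 h), Finset.prod_inv_distrib]
    have hprod0 : (∏ h : Fin H, (Fintype.card (S h.castSucc) : ℝ)) ≠ 0 :=
      Finset.prod_ne_zero_iff.mpr (fun h _ => hS0 _)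
    field_simp
  calc (∑ s : ∀ i : Fin (H + 1), S i, ∑ a : Fin H → A, nu ρ P μ (Fin.last H) (s (Fin.last H)) *
        ∏ h : Fin H, (if (Fin.last H).val ≤ h.val
          then μ h (s h.castSucc) (a h) * P h (s h.castSucc) (a h) (s h.succ)
          else (Fintype.card (S h.castSucc) : ℝ)⁻¹ * (Fintype.card A : ℝ)⁻¹))
      = ∑ s : ∀ i : Fin (H + 1), S i, (Fintype.card (Fin H → A) : ℝ) *
          (nu ρ P μ (Fin.last H) (s (Fin.last H)) * K) := by
        refine Fintype.sum_congr _ _ fun s => ?_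
        rw [Finset.sum_congr rfl (fun a _ => by rw [hC s a])]
        rw [Finset.sum_const, Finset.card_univ, nsmul_eq_mul]
    _ = ∑ s : ∀ i : Fin (H + 1), S i,
          ((Fintype.card (Fin H → A) : ℝ) * K) * nu ρ P μ (Fin.last H) (s (Fin.last H)) := by
        refine Fintype.sum_congr _ _ fun s => ?_; ring
    _ = ((Fintype.card (Fin H → A) : ℝ) * K) *
          ∑ s : ∀ i : Fin (H + 1), S i, nu ρ P μ (Fin.last H) (s (Fin.last H)) := by
        rw [Finset.mul_sum]
    _ = ((Fintype.card (Fin H → A) : ℝ) * K) * ((Fintype.card (S (Fin.last H)) : ℝ)⁻¹ *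
          ∑ x : S (Fin.last H), ∑ _s : ∀ i : Fin (H + 1), S i, nu ρ P μ (Fin.last H) x) := by
        rw [sum_pi_eval (T := S) (Fin.last H)
          (fun x _ => nu ρ P μ (Fin.last H) x) (fun x s y => rfl)]
    _ = ((Fintype.card (Fin H → A) : ℝ) * K) * ((Fintype.card (S (Fin.last H)) : ℝ)⁻¹ *
          ((Fintype.card (∀ i : Fin (H + 1), S i) : ℝ) * ∑ x, nu ρ P μ (Fin.last H) x)) := by
        congr 1
        congr 1
        simp only [Finset.sum_const, Finset.card_univ, nsmul_eq_mul, Finset.mul_sum]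
    _ = ((Fintype.card (Fin H → A) : ℝ) * K * ((Fintype.card (S (Fin.last H)) : ℝ)⁻¹ *
          (Fintype.card (∀ i : Fin (H + 1), S i) : ℝ))) * ∑ x, nu ρ P μ (Fin.last H) x := by
        ring
    _ = ∑ x, nu ρ P μ (Fin.last H) x := by rw [hscal, one_mul]

lemma Zstar [∀ i, Nonempty (S i)] [Nonempty A] (ρ : S 0 → ℝ)
    (P : ∀ h : Fin H, S h.castSucc → A → S h.succ → ℝ)
    (μ : ∀ h : Fin H, S h.castSucc → A → ℝ) :
    ∑ s : ∀ i : Fin (H + 1), S i, ∑ a : Fin H → A, trajDensity ρ P μ s a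
      = ∑ x, nu ρ P μ (Fin.last H) x := by
  have chain : ∀ i : Fin (H + 1), Gaux ρ P μ 0 = Gaux ρ P μ i := by
    intro i
    induction i using Fin.induction with
    | zero => rfl
    | succ j ih => exact ih.trans (Gaux_step ρ P μ j)
  rw [← Gaux_zero, chain (Fin.last H), Gaux_last]

lemma mass_const (ρ : S 0 → ℝ) (P : ∀ h : Fin H, S h.castSucc → A → S h.succ → ℝ)
    (μ : ∀ h : Fin H, S h.castSucc → A → ℝ) (k : Fin H)
    (hμ : ∀ i : Fin H, k.val < i.val → ∀ x, ∑ b, μ i x b = 1)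
    (hP : ∀ i : Fin H, k.val < i.val → ∀ x b, ∑ x', P i x b x' = 1) :
    ∀ i : Fin (H + 1), k.val < i.val → ∑ x, nu ρ P μ i x = ∑ x, nu ρ P μ k.succ x := by
  intro i
  induction i using Fin.induction with
  | zero => intro hlt; simp at hlt
  | succ j ih =>
    intro hj
    by_cases hjk : j.val = k.val
    · have hjk' : j = k := Fin.ext hjk
      subst hjk'; rfl
    · have hlt : k.val < j.val := by simp only [Fin.val_succ] at hj; omega
      have hstep : ∑ x, nu ρ P μ j.succ x = ∑ x, nu ρ P μ j.castSucc x := by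
        rw [Fintype.sum_congr _ _ fun x' => nu_succ ρ P μ j x']
        rw [Finset.sum_comm]
        refine Fintype.sum_congr _ _ fun x => ?_
        rw [Finset.sum_comm]
        calc ∑ b, ∑ x', nu ρ P μ j.castSucc x * μ j x b * P j x b x'
            = ∑ b, nu ρ P μ j.castSucc x * μ j x b := by
              refine Fintype.sum_congr _ _ fun b => ?_
              rw [← Finset.mul_sum, hP j hlt x b, mul_one]
          _ = nu ρ P μ j.castSucc x := by
              rw [← Finset.mul_sum, hμ j hlt x, mul_one]
      rw [hstep]
      exact ih (by simpa using hlt)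
lemma expTraj_eval [∀ i, Nonempty (S i)] [Nonempty A] (ρ : S 0 → ℝ)
    (P : ∀ h : Fin H, S h.castSucc → A → S h.succ → ℝ)
    (μ : ∀ h : Fin H, S h.castSucc → A → ℝ)
    (hμ : ∀ h s, ∑ b, μ h s b = 1) (hP : ∀ h s b, ∑ x', P h s b x' = 1)
    (h : Fin H) (φ : S h.castSucc → A → ℝ) :
    expTraj ρ P μ (fun s a => φ (s h.castSucc) (a h))
      = ∑ x, ∑ b, nu ρ P μ h.castSucc x * μ h x b * φ x b := by
  classical
  set μ' : ∀ i : Fin H, S i.castSucc → A → ℝ :=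
    Function.update μ h (fun x b => μ h x b * φ x b) with hμ'def
  have e1 : ∀ i : Fin H, i ≠ h → μ' i = μ i := fun i hi => Function.update_of_ne hi _ _
  have e2 : μ' h = fun x b => μ h x b * φ x b := Function.update_self _ _ _
  have hdens : ∀ (s : ∀ i : Fin (H + 1), S i) (a : Fin H → A),
      trajDensity ρ P μ' s a = trajDensity ρ P μ s a * φ (s h.castSucc) (a h) := by
    intro s a
    rw [trajDensity, trajDensity]
    have hprod : ∏ i : Fin H, (μ' i (s i.castSucc) (a i) * P i (s i.castSucc) (a i) (s i.succ))
        = φ (s h.castSucc) (a h) *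
          ∏ i : Fin H, (μ i (s i.castSucc) (a i) * P i (s i.castSucc) (a i) (s i.succ)) := by
      rw [← Finset.mul_prod_erase Finset.univ _ (Finset.mem_univ h),
        ← Finset.mul_prod_erase Finset.univ
          (fun i => μ i (s i.castSucc) (a i) * P i (s i.castSucc) (a i) (s i.succ))
          (Finset.mem_univ h)]
      have e3 : ∏ i ∈ Finset.univ.erase h,
          (μ' i (s i.castSucc) (a i) * P i (s i.castSucc) (a i) (s i.succ))
          = ∏ i ∈ Finset.univ.erase h,
            (μ i (s i.castSucc) (a i) * P i (s i.castSucc) (a i) (s i.succ)) :=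
        Finset.prod_congr rfl fun i hi => by rw [e1 i (Finset.mem_erase.mp hi).1]
      rw [e3]
      simp only [e2]
      ring
    rw [hprod]
    ring
  have hnu_le : ∀ i : Fin (H + 1), i.val ≤ h.val → ∀ x, nu ρ P μ' i x = nu ρ P μ i x := by
    intro i
    induction i using Fin.induction with
    | zero => intro _ x; rfl
    | succ j ih =>
      intro hle x'
      have hj : j.val < h.val := by simp only [Fin.val_succ] at hle; omega
      have hjh : j ≠ h := fun hc => by rw [hc] at hj; omega
      rw [nu_succ, nu_succ]
      refine Fintype.sum_congr _ _ fun x => Fintype.sum_congr _ _ fun b => ?_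
      rw [ih (by simpa using le_of_lt hj) x, e1 j hjh]
  have hmass : ∑ x, nu ρ P μ' (Fin.last H) x = ∑ x, nu ρ P μ' h.succ x := by
    refine mass_const ρ P μ' h ?_ ?_ (Fin.last H) (by simpa using h.isLt)
    · intro i hi x
      rw [e1 i (fun hc => by rw [hc] at hi; omega)]
      exact hμ i x
    · intro i _ x b; exact hP i x b
  calc expTraj ρ P μ (fun s a => φ (s h.castSucc) (a h))
      = ∑ s : ∀ i : Fin (H + 1), S i, ∑ a : Fin H → A, trajDensity ρ P μ' s a := by
        rw [expTraj]
        exact (Fintype.sum_congr _ _ fun s => Fintype.sum_congr _ _ fun a => hdens s a).symm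
    _ = ∑ x, nu ρ P μ' (Fin.last H) x := Zstar ρ P μ'
    _ = ∑ x, nu ρ P μ' h.succ x := hmass
    _ = ∑ x', ∑ x, ∑ b, nu ρ P μ h.castSucc x * (μ h x b * φ x b) * P h x b x' := by
        refine Fintype.sum_congr _ _ fun x' => ?_
        rw [nu_succ]
        refine Fintype.sum_congr _ _ fun x => Fintype.sum_congr _ _ fun b => ?_
        rw [hnu_le h.castSucc (by simp) x]
        simp only [e2]
    _ = ∑ x, ∑ b, nu ρ P μ h.castSucc x * μ h x b * φ x b := by
        rw [Finset.sum_comm]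
        refine Fintype.sum_congr _ _ fun x => ?_
        rw [Finset.sum_comm]
        refine Fintype.sum_congr _ _ fun b => ?_
        calc ∑ x', nu ρ P μ h.castSucc x * (μ h x b * φ x b) * P h x b x'
            = (nu ρ P μ h.castSucc x * (μ h x b * φ x b)) * ∑ x', P h x b x' := by
              rw [Finset.mul_sum]
          _ = nu ρ P μ h.castSucc x * μ h x b * φ x b := by rw [hP h x b]; ring

lemma expTraj_sum (ρ : S 0 → ℝ) (P : ∀ h : Fin H, S h.castSucc → A → S h.succ → ℝ)
    (μ : ∀ h : Fin H, S h.castSucc → A → ℝ)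
    (g : Fin H → (∀ i : Fin (H + 1), S i) → (Fin H → A) → ℝ) :
    expTraj ρ P μ (fun s a => ∑ h, g h s a) = ∑ h, expTraj ρ P μ (g h) := by
  rw [expTraj]
  simp only [Finset.mul_sum]
  calc ∑ s : ∀ i : Fin (H + 1), S i, ∑ a : Fin H → A, ∑ h : Fin H, trajDensity ρ P μ s a * g h s a
      = ∑ s : ∀ i : Fin (H + 1), S i, ∑ h : Fin H, ∑ a : Fin H → A,
          trajDensity ρ P μ s a * g h s a := Fintype.sum_congr _ _ fun s => Finset.sum_comm
    _ = ∑ h : Fin H, ∑ s : ∀ i : Fin (H + 1), S i, ∑ a : Fin H → A,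
          trajDensity ρ P μ s a * g h s a := Finset.sum_comm
    _ = ∑ h, expTraj ρ P μ (g h) := rfl

lemma fin_telescope {n : ℕ} (t : Fin (n + 1) → ℝ) :
    ∑ i : Fin n, (t i.succ - t i.castSucc) = t (Fin.last n) - t 0 := by
  set u : ℕ → ℝ := fun m => if hm : m < n + 1 then t ⟨m, hm⟩ else 0 with hu
  have h1 : ∑ i : Fin n, (t i.succ - t i.castSucc) = ∑ i ∈ Finset.range n, (u (i + 1) - u i) := by
    rw [← Fin.sum_univ_eq_sum_range (fun m => u (m + 1) - u m) n]
    refine Fintype.sum_congr _ _ fun i => ?_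
    have e1 : u (i.val + 1) = t i.succ := by
      rw [hu]; dsimp only; rw [dif_pos (by omega)]
      exact congrArg t (Fin.ext (by simp))
    have e2 : u i.val = t i.castSucc := by
      rw [hu]; dsimp only; rw [dif_pos (by omega)]
      exact congrArg t (Fin.ext (by simp))
    rw [e1, e2]
  rw [h1, Finset.sum_range_sub]
  have e3 : u n = t (Fin.last n) := by
    rw [hu]; dsimp only; rw [dif_pos (by omega)]
    exact congrArg t (Fin.ext (by simp))
  have e4 : u 0 = t 0 := by
    rw [hu]; dsimp only; rw [dif_pos (by omega)]
    exact congrArg t (Fin.ext (by simp))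
  rw [e3, e4]
lemma nu_pair_next (ρ : S 0 → ℝ) (P : ∀ h : Fin H, S h.castSucc → A → S h.succ → ℝ)
    (μ : ∀ h : Fin H, S h.castSucc → A → ℝ) (h : Fin H) (W : S h.succ → ℝ) :
    ∑ x, ∑ b, nu ρ P μ h.castSucc x * μ h x b * (∑ x', P h x b x' * W x')
      = ∑ x', nu ρ P μ h.succ x' * W x' := by
  symm
  calc ∑ x', nu ρ P μ h.succ x' * W x'
      = ∑ x', ∑ x, ∑ b, nu ρ P μ h.castSucc x * μ h x b * P h x b x' * W x' := by
        refine Fintype.sum_congr _ _ fun x' => ?_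
        rw [nu_succ, Finset.sum_mul]
        exact Fintype.sum_congr _ _ fun x => by rw [Finset.sum_mul]
    _ = ∑ x, ∑ x', ∑ b, nu ρ P μ h.castSucc x * μ h x b * P h x b x' * W x' :=
        Finset.sum_comm
    _ = ∑ x, ∑ b, ∑ x', nu ρ P μ h.castSucc x * μ h x b * P h x b x' * W x' :=
        Fintype.sum_congr _ _ fun x => Finset.sum_comm
    _ = ∑ x, ∑ b, nu ρ P μ h.castSucc x * μ h x b * (∑ x', P h x b x' * W x') := by
        refine Fintype.sum_congr _ _ fun x => Fintype.sum_congr _ _ fun b => ?_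
        rw [Finset.mul_sum]
        exact Fintype.sum_congr _ _ fun x' => by ring

lemma nu_pair_state (ρ : S 0 → ℝ) (P : ∀ h : Fin H, S h.castSucc → A → S h.succ → ℝ)
    (μ : ∀ h : Fin H, S h.castSucc → A → ℝ) (h : Fin H)
    (hμ : ∀ x, ∑ b, μ h x b = 1) (g : S h.castSucc → ℝ) :
    ∑ x, ∑ b, nu ρ P μ h.castSucc x * μ h x b * g x = ∑ x, nu ρ P μ h.castSucc x * g x := by
  refine Fintype.sum_congr _ _ fun x => ?_
  calc ∑ b, nu ρ P μ h.castSucc x * μ h x b * g x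
      = (∑ b, nu ρ P μ h.castSucc x * μ h x b) * g x := by rw [Finset.sum_mul]
    _ = (nu ρ P μ h.castSucc x * ∑ b, μ h x b) * g x := by rw [Finset.mul_sum]
    _ = nu ρ P μ h.castSucc x * g x := by rw [hμ x, mul_one]

/-- **Soft performance difference lemma with arbitrary reference function.** -/
theorem soft_performance_difference
    (hH : 0 < H) [∀ i, Nonempty (S i)] [Nonempty A]
    (ρ : S 0 → ℝ) (hρ : IsPMF ρ)
    (P : ∀ h : Fin H, S h.castSucc → A → S h.succ → ℝ)
    (hP : ∀ h s a, IsPMF (P h s a))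
    (r : ∀ h : Fin H, S h.castSucc → A → ℝ)
    (πref : ∀ h : Fin H, S h.castSucc → A → ℝ)
    (hπref : ∀ h s, IsPMF (πref h s)) (hπrefpos : ∀ h s a, 0 < πref h s a)
    (β : ℝ) (hβ : 0 < β)
    (πdag π : ∀ h : Fin H, S h.castSucc → A → ℝ)
    (hπdag : ∀ h s, IsPMF (πdag h s)) (hπ : ∀ h s, IsPMF (π h s))
    (f : ∀ h : Fin H, S h.castSucc → A → ℝ) :
    KLret ρ P πref r β πdag - KLret ρ P πref r β π =
      expTraj ρ P πdag (fun s a => ∑ h : Fin H,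
          (Tpol P πref r β π f h (s h.castSucc) (a h) - f h (s h.castSucc) (a h)))
        + expTraj ρ P π (fun s a => ∑ h : Fin H,
            (f h (s h.castSucc) (a h) - Tpol P πref r β π f h (s h.castSucc) (a h)))
        + expTraj ρ P πdag (fun s a => ∑ h : Fin H,
            (f h (s h.castSucc) (a h)
              - β * Real.log (πdag h (s h.castSucc) (a h) / πref h (s h.castSucc) (a h))
              - ∑ b : A, π h (s h.castSucc) b *
                  (f h (s h.castSucc) b
                    - β * Real.log (π h (s h.castSucc) b / πref h (s h.castSucc) b)))) := by
  classical
  have hμd : ∀ (h : Fin H) s, ∑ b, πdag h s b = 1 := fun h s => (hπdag h s).2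
  have hμp : ∀ (h : Fin H) s, ∑ b, π h s b = 1 := fun h s => (hπ h s).2
  have hPs : ∀ (h : Fin H) s b, ∑ x', P h s b x' = 1 := fun h s b => (hP h s b).2
  have red : ∀ (μ : ∀ h : Fin H, S h.castSucc → A → ℝ), (∀ h s, ∑ b, μ h s b = 1) →
      ∀ g : ∀ h : Fin H, S h.castSucc → A → ℝ,
      expTraj ρ P μ (fun s a => ∑ h : Fin H, g h (s h.castSucc) (a h))
        = ∑ h : Fin H, ∑ x, ∑ b, nu ρ P μ h.castSucc x * μ h x b * g h x b := by
    intro μ hμ g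
    rw [expTraj_sum ρ P μ (fun h s a => g h (s h.castSucc) (a h))]
    exact Fintype.sum_congr _ _ fun h => expTraj_eval ρ P μ hμ hPs h (g h)
  set V : ∀ i : Fin (H + 1), S i → ℝ := softCont πref β π f with hV
  have hVc : ∀ (h : Fin H) (x : S h.castSucc),
      V h.castSucc x = ∑ b, π h x b * (f h x b - β * Real.log (π h x b / πref h x b)) := by
    intro h x
    rw [hV, softCont, Fin.lastCases_castSucc]
  have hVl : ∀ x, V (Fin.last H) x = 0 := by
    intro x; rw [hV, softCont, Fin.lastCases_last]
  have e1 : KLret ρ P πref r β πdag = ∑ h : Fin H, ∑ x, ∑ b,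
      nu ρ P πdag h.castSucc x * πdag h x b *
        (r h x b - β * Real.log (πdag h x b / πref h x b)) :=
    red πdag hμd (fun h x b => r h x b - β * Real.log (πdag h x b / πref h x b))
  have e2 : KLret ρ P πref r β π = ∑ h : Fin H, ∑ x, ∑ b,
      nu ρ P π h.castSucc x * π h x b *
        (r h x b - β * Real.log (π h x b / πref h x b)) :=
    red π hμp (fun h x b => r h x b - β * Real.log (π h x b / πref h x b))
  have e3 : expTraj ρ P πdag (fun s a => ∑ h : Fin H,
      (Tpol P πref r β π f h (s h.castSucc) (a h) - f h (s h.castSucc) (a h)))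
      = ∑ h : Fin H, ∑ x, ∑ b, nu ρ P πdag h.castSucc x * πdag h x b *
          (Tpol P πref r β π f h x b - f h x b) :=
    red πdag hμd (fun h x b => Tpol P πref r β π f h x b - f h x b)
  have e4 : expTraj ρ P π (fun s a => ∑ h : Fin H,
      (f h (s h.castSucc) (a h) - Tpol P πref r β π f h (s h.castSucc) (a h)))
      = ∑ h : Fin H, ∑ x, ∑ b, nu ρ P π h.castSucc x * π h x b *
          (f h x b - Tpol P πref r β π f h x b) :=
    red π hμp (fun h x b => f h x b - Tpol P πref r β π f h x b)
  have e5 : expTraj ρ P πdag (fun s a => ∑ h : Fin H,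
      (f h (s h.castSucc) (a h)
        - β * Real.log (πdag h (s h.castSucc) (a h) / πref h (s h.castSucc) (a h))
        - ∑ b : A, π h (s h.castSucc) b *
            (f h (s h.castSucc) b
              - β * Real.log (π h (s h.castSucc) b / πref h (s h.castSucc) b))))
      = ∑ h : Fin H, ∑ x, ∑ b, nu ρ P πdag h.castSucc x * πdag h x b *
          (f h x b - β * Real.log (πdag h x b / πref h x b)
            - ∑ b' : A, π h x b' * (f h x b' - β * Real.log (π h x b' / πref h x b'))) :=
    red πdag hμd (fun h x b => f h x b - β * Real.log (πdag h x b / πref h x b)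
      - ∑ b' : A, π h x b' * (f h x b' - β * Real.log (π h x b' / πref h x b')))
  rw [e1, e2, e3, e4, e5]
  -- now pure algebra on nu-sums
  have hY1 : ∀ h : Fin H,
      ∑ x, ∑ b, nu ρ P πdag h.castSucc x * πdag h x b * (Tpol P πref r β π f h x b - f h x b)
      = ((∑ x, ∑ b, nu ρ P πdag h.castSucc x * πdag h x b * r h x b)
          + (∑ x, nu ρ P πdag h.succ x * V h.succ x))
        - (∑ x, ∑ b, nu ρ P πdag h.castSucc x * πdag h x b * f h x b) := by
    intro h
    calc ∑ x, ∑ b, nu ρ P πdag h.castSucc x * πdag h x b * (Tpol P πref r β π f h x b - f h x b)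
        = ∑ x, ∑ b, ((nu ρ P πdag h.castSucc x * πdag h x b * r h x b
            + nu ρ P πdag h.castSucc x * πdag h x b * (∑ x', P h x b x' * V h.succ x'))
            - nu ρ P πdag h.castSucc x * πdag h x b * f h x b) := by
          refine Fintype.sum_congr _ _ fun x => Fintype.sum_congr _ _ fun b => ?_
          rw [Tpol, hV]; ring
      _ = ((∑ x, ∑ b, nu ρ P πdag h.castSucc x * πdag h x b * r h x b)
            + (∑ x, ∑ b, nu ρ P πdag h.castSucc x * πdag h x b * (∑ x', P h x b x' * V h.succ x')))
          - (∑ x, ∑ b, nu ρ P πdag h.castSucc x * πdag h x b * f h x b) := by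
          simp only [Finset.sum_add_distrib, Finset.sum_sub_distrib]
      _ = _ := by rw [nu_pair_next ρ P πdag h (V h.succ)]
  have hY2 : ∀ h : Fin H,
      ∑ x, ∑ b, nu ρ P π h.castSucc x * π h x b * (f h x b - Tpol P πref r β π f h x b)
      = ((∑ x, ∑ b, nu ρ P π h.castSucc x * π h x b * f h x b)
          - (∑ x, ∑ b, nu ρ P π h.castSucc x * π h x b * r h x b))
        - (∑ x, nu ρ P π h.succ x * V h.succ x) := by
    intro h
    calc ∑ x, ∑ b, nu ρ P π h.castSucc x * π h x b * (f h x b - Tpol P πref r β π f h x b)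
        = ∑ x, ∑ b, ((nu ρ P π h.castSucc x * π h x b * f h x b
            - nu ρ P π h.castSucc x * π h x b * r h x b)
            - nu ρ P π h.castSucc x * π h x b * (∑ x', P h x b x' * V h.succ x')) := by
          refine Fintype.sum_congr _ _ fun x => Fintype.sum_congr _ _ fun b => ?_
          rw [Tpol, hV]; ring
      _ = ((∑ x, ∑ b, nu ρ P π h.castSucc x * π h x b * f h x b)
            - (∑ x, ∑ b, nu ρ P π h.castSucc x * π h x b * r h x b))
          - (∑ x, ∑ b, nu ρ P π h.castSucc x * π h x b * (∑ x', P h x b x' * V h.succ x')) := by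
          simp only [Finset.sum_sub_distrib]
      _ = _ := by rw [nu_pair_next ρ P π h (V h.succ)]
  have hY3 : ∀ h : Fin H,
      ∑ x, ∑ b, nu ρ P πdag h.castSucc x * πdag h x b *
          (f h x b - β * Real.log (πdag h x b / πref h x b)
            - ∑ b' : A, π h x b' * (f h x b' - β * Real.log (π h x b' / πref h x b')))
      = ((∑ x, ∑ b, nu ρ P πdag h.castSucc x * πdag h x b * f h x b)
          - (∑ x, ∑ b, nu ρ P πdag h.castSucc x * πdag h x b *
              (β * Real.log (πdag h x b / πref h x b))))
        - (∑ x, nu ρ P πdag h.castSucc x * V h.castSucc x) := by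
    intro h
    calc ∑ x, ∑ b, nu ρ P πdag h.castSucc x * πdag h x b *
          (f h x b - β * Real.log (πdag h x b / πref h x b)
            - ∑ b' : A, π h x b' * (f h x b' - β * Real.log (π h x b' / πref h x b')))
        = ∑ x, ∑ b, ((nu ρ P πdag h.castSucc x * πdag h x b * f h x b
            - nu ρ P πdag h.castSucc x * πdag h x b * (β * Real.log (πdag h x b / πref h x b)))
            - nu ρ P πdag h.castSucc x * πdag h x b * V h.castSucc x) := by
          refine Fintype.sum_congr _ _ fun x => Fintype.sum_congr _ _ fun b => ?_
          rw [hVc h x]; ring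
      _ = ((∑ x, ∑ b, nu ρ P πdag h.castSucc x * πdag h x b * f h x b)
            - (∑ x, ∑ b, nu ρ P πdag h.castSucc x * πdag h x b *
                (β * Real.log (πdag h x b / πref h x b))))
          - (∑ x, ∑ b, nu ρ P πdag h.castSucc x * πdag h x b * V h.castSucc x) := by
          simp only [Finset.sum_sub_distrib]
      _ = _ := by rw [nu_pair_state ρ P πdag h (hμd h) (V h.castSucc)]
  have hXd : ∀ h : Fin H,
      ∑ x, ∑ b, nu ρ P πdag h.castSucc x * πdag h x b *
          (r h x b - β * Real.log (πdag h x b / πref h x b))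
      = (∑ x, ∑ b, nu ρ P πdag h.castSucc x * πdag h x b * r h x b)
        - (∑ x, ∑ b, nu ρ P πdag h.castSucc x * πdag h x b *
            (β * Real.log (πdag h x b / πref h x b))) := by
    intro h
    rw [← Finset.sum_sub_distrib]
    refine Fintype.sum_congr _ _ fun x => ?_
    rw [← Finset.sum_sub_distrib]
    exact Fintype.sum_congr _ _ fun b => by ring
  have hXp : ∀ h : Fin H,
      ∑ x, ∑ b, nu ρ P π h.castSucc x * π h x b *
          (r h x b - β * Real.log (π h x b / πref h x b))
      = (∑ x, ∑ b, nu ρ P π h.castSucc x * π h x b * r h x b)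
        - (∑ x, ∑ b, nu ρ P π h.castSucc x * π h x b *
            (β * Real.log (π h x b / πref h x b))) := by
    intro h
    rw [← Finset.sum_sub_distrib]
    refine Fintype.sum_congr _ _ fun x => ?_
    rw [← Finset.sum_sub_distrib]
    exact Fintype.sum_congr _ _ fun b => by ring
  have hFp : ∀ h : Fin H,
      (∑ x, ∑ b, nu ρ P π h.castSucc x * π h x b * f h x b)
        - (∑ x, ∑ b, nu ρ P π h.castSucc x * π h x b *
            (β * Real.log (π h x b / πref h x b)))
      = ∑ x, nu ρ P π h.castSucc x * V h.castSucc x := by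
    intro h
    rw [← Finset.sum_sub_distrib]
    refine Fintype.sum_congr _ _ fun x => ?_
    rw [← Finset.sum_sub_distrib]
    calc ∑ b, (nu ρ P π h.castSucc x * π h x b * f h x b
          - nu ρ P π h.castSucc x * π h x b * (β * Real.log (π h x b / πref h x b)))
        = ∑ b, nu ρ P π h.castSucc x *
            (π h x b * (f h x b - β * Real.log (π h x b / πref h x b))) := by
          exact Fintype.sum_congr _ _ fun b => by ring
      _ = nu ρ P π h.castSucc x * V h.castSucc x := by
          rw [← Finset.mul_sum, hVc h x]
  -- telescopes
  have hTd : ∑ h : Fin H, ((∑ x, nu ρ P πdag h.succ x * V h.succ x)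
      - (∑ x, nu ρ P πdag h.castSucc x * V h.castSucc x))
      = - ∑ x, nu ρ P πdag 0 x * V 0 x := by
    rw [fin_telescope (fun i => ∑ x, nu ρ P πdag i x * V i x)]
    have : ∑ x, nu ρ P πdag (Fin.last H) x * V (Fin.last H) x = 0 := by
      refine Finset.sum_eq_zero fun x _ => ?_
      rw [hVl x, mul_zero]
    rw [this]; ring
  have hTp : ∑ h : Fin H, ((∑ x, nu ρ P π h.succ x * V h.succ x)
      - (∑ x, nu ρ P π h.castSucc x * V h.castSucc x))
      = - ∑ x, nu ρ P π 0 x * V 0 x := by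
    rw [fin_telescope (fun i => ∑ x, nu ρ P π i x * V i x)]
    have : ∑ x, nu ρ P π (Fin.last H) x * V (Fin.last H) x = 0 := by
      refine Finset.sum_eq_zero fun x _ => ?_
      rw [hVl x, mul_zero]
    rw [this]; ring
  have h00 : ∑ x, nu ρ P πdag 0 x * V 0 x = ∑ x, nu ρ P π 0 x * V 0 x := rfl
  -- per-step combination
  have hper : ∀ h : Fin H,
      (∑ x, ∑ b, nu ρ P πdag h.castSucc x * πdag h x b * (Tpol P πref r β π f h x b - f h x b))
      + (∑ x, ∑ b, nu ρ P π h.castSucc x * π h x b * (f h x b - Tpol P πref r β π f h x b))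
      + (∑ x, ∑ b, nu ρ P πdag h.castSucc x * πdag h x b *
          (f h x b - β * Real.log (πdag h x b / πref h x b)
            - ∑ b' : A, π h x b' * (f h x b' - β * Real.log (π h x b' / πref h x b'))))
      = (∑ x, ∑ b, nu ρ P πdag h.castSucc x * πdag h x b *
          (r h x b - β * Real.log (πdag h x b / πref h x b)))
        - (∑ x, ∑ b, nu ρ P π h.castSucc x * π h x b *
            (r h x b - β * Real.log (π h x b / πref h x b)))
        + (((∑ x, nu ρ P πdag h.succ x * V h.succ x)
            - (∑ x, nu ρ P πdag h.castSucc x * V h.castSucc x))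
          - ((∑ x, nu ρ P π h.succ x * V h.succ x)
            - (∑ x, nu ρ P π h.castSucc x * V h.castSucc x))) := by
    intro h
    rw [hY1 h, hY2 h, hY3 h, hXd h, hXp h]
    have := hFp h
    linarith [this]
  calc (∑ h : Fin H, ∑ x, ∑ b, nu ρ P πdag h.castSucc x * πdag h x b *
          (r h x b - β * Real.log (πdag h x b / πref h x b)))
        - ∑ h : Fin H, ∑ x, ∑ b, nu ρ P π h.castSucc x * π h x b *
          (r h x b - β * Real.log (π h x b / πref h x b))
      = (∑ h : Fin H, ∑ x, ∑ b, nu ρ P πdag h.castSucc x * πdag h x b *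
          (r h x b - β * Real.log (πdag h x b / πref h x b)))
        - (∑ h : Fin H, ∑ x, ∑ b, nu ρ P π h.castSucc x * π h x b *
          (r h x b - β * Real.log (π h x b / πref h x b)))
        + ((∑ h : Fin H, ((∑ x, nu ρ P πdag h.succ x * V h.succ x)
            - (∑ x, nu ρ P πdag h.castSucc x * V h.castSucc x)))
          - (∑ h : Fin H, ((∑ x, nu ρ P π h.succ x * V h.succ x)
            - (∑ x, nu ρ P π h.castSucc x * V h.castSucc x)))) := by
        rw [hTd, hTp, h00]; ring
    _ = ∑ h : Fin H,
        ((∑ x, ∑ b, nu ρ P πdag h.castSucc x * πdag h x b *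
            (r h x b - β * Real.log (πdag h x b / πref h x b)))
          - (∑ x, ∑ b, nu ρ P π h.castSucc x * π h x b *
              (r h x b - β * Real.log (π h x b / πref h x b)))
          + (((∑ x, nu ρ P πdag h.succ x * V h.succ x)
              - (∑ x, nu ρ P πdag h.castSucc x * V h.castSucc x))
            - ((∑ x, nu ρ P π h.succ x * V h.succ x)
              - (∑ x, nu ρ P π h.castSucc x * V h.castSucc x)))) := by
        simp only [Finset.sum_sub_distrib, Finset.sum_add_distrib]
    _ = ∑ h : Fin H,
        ((∑ x, ∑ b, nu ρ P πdag h.castSucc x * πdag h x b * (Tpol P πref r β π f h x b - f h x b))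
          + (∑ x, ∑ b, nu ρ P π h.castSucc x * π h x b * (f h x b - Tpol P πref r β π f h x b))
          + (∑ x, ∑ b, nu ρ P πdag h.castSucc x * πdag h x b *
              (f h x b - β * Real.log (πdag h x b / πref h x b)
                - ∑ b' : A, π h x b' * (f h x b' - β * Real.log (π h x b' / πref h x b'))))) := by
        exact Fintype.sum_congr _ _ fun h => (hper h).symm
    _ = _ := by
        rw [Finset.sum_add_distrib, Finset.sum_add_distrib]


end TBRM
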